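/- arXiv:quant-ph/0603168 — 2 statements merged into one kernel-verified Lean document; each statement's English description precedes it below -/
import Mathlib

section
/- (Minimal support condition) A point A ∈ 𝒞 is an extreme point of 𝒞 if and only if for every B ∈ 𝒞, the condition that the range of B i is contained in the range of A i for all i ∈ I implies B = A. -/
open ContinuousLinearMap

set_option maxHeartbeats 1000000
set_option synthInstance.maxHeartbeats 200000

/-- The linear map `L(A) = (1/|G|) · Σ_{i ∈ I} Σ_{g ∈ G} (U g) ∘ (A i) ∘ (U g)†`
associated to a family of operators `A : I → (H →L[ℂ] H)`. -/
noncomputable def Lmap {H : Type*} [NormedAddCommGroup H] [InnerProductSpace ℂ H]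
    [FiniteDimensional ℂ H] {G : Type*} [Group G] [Fintype G] {I : Type*} [Fintype I]
    (U : G → (H →L[ℂ] H)) (A : I → (H →L[ℂ] H)) : H →L[ℂ] H :=
  (Fintype.card G : ℂ)⁻¹ •
    ∑ i : I, ∑ g : G, U g ∘L A i ∘L ContinuousLinearMap.adjoint (U g)

/-- The convex set `𝒞` of block operators corresponding to covariant POVMs with
outcome space `I × G`: families `A` with every `A i` positive semidefinite and `L(A) = 1`. -/
def covSet {H : Type*} [NormedAddCommGroup H] [InnerProductSpace ℂ H]
    [FiniteDimensional ℂ H] {G : Type*} [Group G] [Fintype G] {I : Type*} [Fintype I]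
    (U : G → (H →L[ℂ] H)) : Set (I → (H →L[ℂ] H)) :=
  {A | (∀ i, (A i).IsPositive) ∧ Lmap U A = 1}

section Aux

open RCLike

variable {H : Type*} [NormedAddCommGroup H] [InnerProductSpace ℂ H] [FiniteDimensional ℂ H]

local notation "⟪" x ", " y "⟫" => @inner ℂ _ _ x y

/-- For a positive operator, vanishing of the quadratic form at `x` forces `T x = 0`. -/
lemma aux_apply_eq_zero {T : H →L[ℂ] H} (hT : T.IsPositive) {x : H}
    (hx : re ⟪T x, x⟫ = 0) : T x = 0 := by
  have hsym : ∀ u v : H, ⟪T u, v⟫ = ⟪u, T v⟫ :=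
    (isSelfAdjoint_iff_isSymmetric.mp hT.isSelfAdjoint)
  have hc0 : (0:ℝ) ≤ re ⟪T (T x), T x⟫ := hT.re_inner_nonneg_left _
  have key : ∀ t : ℝ, 0 ≤ 2 * t * ‖T x‖ ^ 2 + t ^ 2 * re ⟪T (T x), T x⟫ := by
    intro t
    have h := hT.re_inner_nonneg_left (x + (t : ℂ) • T x)
    have e2 : re ⟪T (T x), x⟫ = ‖T x‖ ^ 2 := by
      rw [hsym]; exact inner_self_eq_norm_sq (𝕜 := ℂ) (T x)
    have e3 : re ⟪T x, T x⟫ = ‖T x‖ ^ 2 := inner_self_eq_norm_sq (𝕜 := ℂ) (T x)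
    have expand : re ⟪T (x + (t:ℂ) • T x), x + (t:ℂ) • T x⟫
        = re ⟪T x, x⟫ + 2 * t * ‖T x‖ ^ 2 + t ^ 2 * re ⟪T (T x), T x⟫ := by
      rw [map_add, map_smul]
      rw [inner_add_left, inner_add_right, inner_add_right,
        inner_smul_left, inner_smul_right, inner_smul_right, inner_smul_left]
      simp only [Complex.conj_ofReal, map_add, RCLike.re_to_complex, Complex.add_re,
        Complex.re_ofReal_mul, ← Complex.ofReal_pow, ← mul_assoc, ← Complex.ofReal_mul]
      rw [← RCLike.re_to_complex (x := inner ℂ (T (T x)) x), e2,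
        ← RCLike.re_to_complex (x := inner ℂ (T x) (T x)), e3]
      ring
    rw [expand, hx] at h; linarith
  have hn0 : ‖T x‖ ^ 2 = 0 := by
    by_contra hne
    have hnpos : 0 < ‖T x‖ ^ 2 := lt_of_le_of_ne (by positivity) (Ne.symm hne)
    have hkey := key (-(‖T x‖ ^ 2) / (re ⟪T (T x), T x⟫ + 1))
    have hc1 : (0:ℝ) < re ⟪T (T x), T x⟫ + 1 := by linarith
    generalize hN : ‖T x‖ ^ 2 = n at *
    generalize hC : re ⟪T (T x), T x⟫ = c at *
    have h3 : (0:ℝ) ≤ ((c+1)^2) * (2 * (-n / (c + 1)) * n + (-n / (c + 1)) ^ 2 * c) :=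
      mul_nonneg (by positivity) hkey
    have h4 : ((c+1)^2) * (2 * (-n / (c + 1)) * n + (-n / (c + 1)) ^ 2 * c)
        = -2*n^2*(c+1) + n^2*c := by
      field_simp
    rw [h4] at h3
    nlinarith [hnpos, hc0]
  simpa using (pow_eq_zero_iff (two_ne_zero)).mp hn0

/-- For a self-adjoint operator, the orthogonal complement of the range is the kernel. -/
lemma aux_orth_range {T : H →L[ℂ] H} (hT : IsSelfAdjoint T) :
    (LinearMap.range (T : H →ₗ[ℂ] H))ᗮ = LinearMap.ker (T : H →ₗ[ℂ] H) := by
  have hsym : ∀ u v : H, ⟪T u, v⟫ = ⟪u, T v⟫ := fun u v =>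
    (isSelfAdjoint_iff_isSymmetric.mp hT) u v
  ext x
  simp only [Submodule.mem_orthogonal, LinearMap.mem_range, LinearMap.mem_ker,
    forall_exists_index]
  constructor
  · intro h
    have hy : ∀ y, ⟪y, T x⟫ = 0 := fun y => by
      rw [← hsym]; exact h (T y) y rfl
    exact inner_self_eq_zero.mp (hy (T x))
  · intro h u y hy
    subst hy
    simp only [ContinuousLinearMap.coe_coe] at h ⊢
    rw [hsym y x, h, inner_zero_right]

/-- For a self-adjoint operator, the range is the orthogonal complement of the kernel. -/
lemma aux_range_eq {T : H →L[ℂ] H} (hT : IsSelfAdjoint T) :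
    LinearMap.range (T : H →ₗ[ℂ] H) = (LinearMap.ker (T : H →ₗ[ℂ] H))ᗮ := by
  rw [← aux_orth_range hT, Submodule.orthogonal_orthogonal]

/-- A positive operator is bounded below on its range. -/
lemma aux_min_bound {S : H →L[ℂ] H} (hS : S.IsPositive) :
    ∃ μ > (0:ℝ), ∀ x ∈ LinearMap.range (S : H →ₗ[ℂ] H), μ * ‖x‖ ^ 2 ≤ re ⟪S x, x⟫ := by
  set V : Submodule ℂ H := LinearMap.range (S : H →ₗ[ℂ] H) with hV
  by_cases hbot : V = ⊥
  · refine ⟨1, one_pos, fun x hx => ?_⟩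
    rw [hbot] at hx
    simp only [Submodule.mem_bot] at hx
    simp [hx]
  · -- nonempty sphere
    obtain ⟨v, hvV, hvne⟩ := Submodule.exists_mem_ne_zero_of_ne_bot hbot
    have hsne : (Metric.sphere (0 : V) 1).Nonempty := by
      refine ⟨(‖v‖⁻¹ : ℝ) • ⟨v, hvV⟩, ?_⟩
      have hnv : ‖(⟨v, hvV⟩ : V)‖ = ‖v‖ := (Submodule.norm_coe ⟨v, hvV⟩).symm
      rw [mem_sphere_zero_iff_norm, norm_smul, hnv, Real.norm_eq_abs,
        abs_of_nonneg (inv_nonneg.mpr (norm_nonneg v))]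
      exact inv_mul_cancel₀ (norm_ne_zero_iff.mpr hvne)
    have hcont : Continuous (fun w : V => re ⟪S (w : H), (w : H)⟫) := by
      exact RCLike.continuous_re.comp
        ((S.continuous.comp continuous_subtype_val).inner continuous_subtype_val)
    obtain ⟨w₀, hw₀s, hw₀min'⟩ :=
      (isCompact_sphere (0:V) 1).exists_isMinOn hsne hcont.continuousOn
    have hw₀min : ∀ w ∈ Metric.sphere (0:V) 1,
        re ⟪S (w₀ : H), (w₀ : H)⟫ ≤ re ⟪S (w : H), (w : H)⟫ := fun w hw => hw₀min' hw
    set μ := re ⟪S (w₀ : H), (w₀ : H)⟫ with hμ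
    have hw₀norm : ‖(w₀ : H)‖ = 1 := by
      rw [Submodule.norm_coe]
      exact mem_sphere_zero_iff_norm.mp hw₀s
    have hμpos : 0 < μ := by
      rcases lt_or_eq_of_le (hS.re_inner_nonneg_left (w₀ : H)) with h | h
      · exact h
      · exfalso
        have hz : S (w₀ : H) = 0 := aux_apply_eq_zero hS h.symm
        have hker : (w₀ : H) ∈ (LinearMap.range (S : H →ₗ[ℂ] H))ᗮ := by
          rw [aux_orth_range hS.isSelfAdjoint]
          exact hz
        have : (w₀ : H) = 0 := by
          have h0 : ⟪(w₀:H), (w₀:H)⟫ = 0 := hker (w₀ : H) w₀.2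
          exact inner_self_eq_zero.mp h0
        rw [this] at hw₀norm; simp at hw₀norm
    refine ⟨μ, hμpos, fun x hx => ?_⟩
    by_cases hx0 : x = 0
    · simp [hx0]
    · set w : V := ((‖x‖⁻¹ : ℝ) : ℂ) • ⟨x, hx⟩ with hw
      have hwnorm : w ∈ Metric.sphere (0:V) 1 := by
        rw [mem_sphere_zero_iff_norm]
        simp [hw, norm_smul, inv_mul_cancel₀ (norm_ne_zero_iff.mpr hx0)]
      have hle := hw₀min w hwnorm
      have hcoe : (w : H) = ((‖x‖⁻¹ : ℝ) : ℂ) • x := rfl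
      rw [hcoe] at hle
      rw [map_smul, inner_smul_left, inner_smul_right, Complex.conj_ofReal, ← mul_assoc,
        ← Complex.ofReal_mul] at hle
      rw [RCLike.re_to_complex, Complex.re_ofReal_mul] at hle
      have hxn : (0:ℝ) < ‖x‖ := norm_pos_iff.mpr hx0
      have hn2 : (0:ℝ) < ‖x‖ ^ 2 := by positivity
      rw [RCLike.re_to_complex]
      have h5 := mul_le_mul_of_nonneg_right hle (le_of_lt hn2)
      have h6 : ‖x‖⁻¹ * ‖x‖⁻¹ * (inner ℂ (S x) x : ℂ).re * ‖x‖ ^ 2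
          = (inner ℂ (S x) x : ℂ).re := by
        have hne : ‖x‖ ≠ 0 := norm_ne_zero_iff.mpr hx0
        field_simp [pow_two]
      rw [h6] at h5
      exact h5

/-- Perturbation of a positive operator by a self-adjoint operator supported on its range
stays positive for small parameters. -/
lemma aux_perturb {S D : H →L[ℂ] H} (hS : S.IsPositive) (hD : IsSelfAdjoint D)
    (hrange : LinearMap.range (D : H →ₗ[ℂ] H) ≤ LinearMap.range (S : H →ₗ[ℂ] H)) :
    ∃ ε > (0:ℝ), ∀ t : ℝ, |t| ≤ ε → (S + t • D).IsPositive := by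
  obtain ⟨μ, hμ, hmin⟩ := aux_min_bound hS
  refine ⟨μ / (‖D‖ + 1), by positivity, fun t ht => ?_⟩
  have hsa : IsSelfAdjoint (S + t • D) := by
    rw [isSelfAdjoint_iff_isSymmetric]
    have h1 : ∀ u v : H, ⟪S u, v⟫ = ⟪u, S v⟫ := fun u v =>
      isSelfAdjoint_iff_isSymmetric.mp hS.isSelfAdjoint u v
    have h2 : ∀ u v : H, ⟪D u, v⟫ = ⟪u, D v⟫ := fun u v =>
      isSelfAdjoint_iff_isSymmetric.mp hD u v
    intro x y
    have e : ∀ z, (↑(S + t • D) : H →ₗ[ℂ] H) z = S z + t • D z := fun z => rfl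
    rw [e x, e y]
    rw [inner_add_left, inner_add_right,
      RCLike.real_smul_eq_coe_smul (K := ℂ) t (D x), RCLike.real_smul_eq_coe_smul (K := ℂ) t (D y),
      inner_smul_left, inner_smul_right, RCLike.conj_ofReal, h1 x y, h2 x y]
  refine ⟨isSelfAdjoint_iff_isSymmetric.mp hsa, fun x => ?_⟩
  obtain ⟨v, hv, u, hu, hxvu⟩ :=
    Submodule.exists_add_mem_mem_orthogonal (K := LinearMap.range (S : H →ₗ[ℂ] H)) x
  have hSu : S u = 0 := by
    have := (aux_orth_range hS.isSelfAdjoint) ▸ hu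
    exact this
  have hDu : D u = 0 := by
    have hu' : u ∈ (LinearMap.range (D : H →ₗ[ℂ] H))ᗮ := Submodule.orthogonal_le hrange hu
    have : u ∈ LinearMap.ker (D : H →ₗ[ℂ] H) := by rw [← aux_orth_range hD]; exact hu'
    exact this
  have happ : (S + t • D) x = S v + t • D v := by
    rw [hxvu]
    simp [map_add, hSu, hDu]
  have hSvu : ⟪S v, u⟫ = 0 := hu (S v) (LinearMap.mem_range_self _ v)
  have hDvu : ⟪D v, u⟫ = 0 := hu (D v) (hrange (LinearMap.mem_range_self _ v))
  have hexp : re ⟪(S + t • D) x, x⟫ = re ⟪S v, v⟫ + t * re ⟪D v, v⟫ := by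
    rw [happ, hxvu, inner_add_left, inner_add_right, inner_add_right, hSvu,
      RCLike.real_smul_eq_coe_smul (K := ℂ) t (D v),
      inner_smul_left, inner_smul_left, RCLike.conj_ofReal, hDvu, mul_zero, add_zero, add_zero]
    rw [map_add, RCLike.re_ofReal_mul]
  rw [reApplyInnerSelf_apply, hexp]
  have hb : |re ⟪D v, v⟫| ≤ ‖D‖ * ‖v‖ ^ 2 := by
    calc |re ⟪D v, v⟫| ≤ ‖⟪D v, v⟫‖ := Complex.abs_re_le_norm _
      _ ≤ ‖D v‖ * ‖v‖ := norm_inner_le_norm _ _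
      _ ≤ ‖D‖ * ‖v‖ * ‖v‖ := mul_le_mul_of_nonneg_right (D.le_opNorm v) (norm_nonneg v)
      _ = ‖D‖ * ‖v‖ ^ 2 := by ring
  have key : |t| * ‖D‖ ≤ μ := by
    calc |t| * ‖D‖ ≤ μ / (‖D‖ + 1) * ‖D‖ :=
        mul_le_mul_of_nonneg_right ht (norm_nonneg D)
      _ ≤ μ := by
        rw [div_mul_eq_mul_div, div_le_iff₀ (by positivity)]
        nlinarith [norm_nonneg D]
  have hmin' := hmin v hv
  nlinarith [neg_abs_le (t * re ⟪D v, v⟫), abs_mul t (re ⟪D v, v⟫),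
    mul_le_mul_of_nonneg_left hb (abs_nonneg t), sq_nonneg ‖v‖,
    mul_le_mul_of_nonneg_right key (sq_nonneg ‖v‖)]

end Aux

section LmapLinear

variable {H : Type*} [NormedAddCommGroup H] [InnerProductSpace ℂ H]
    [FiniteDimensional ℂ H] {G : Type*} [Group G] [Fintype G] {I : Type*} [Fintype I]
    (U : G → (H →L[ℂ] H))

lemma Lmap_add (A B : I → (H →L[ℂ] H)) :
    Lmap U (fun i => A i + B i) = Lmap U A + Lmap U B := by
  simp only [Lmap, comp_add, add_comp, Finset.sum_add_distrib, smul_add]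

lemma Lmap_sub (A B : I → (H →L[ℂ] H)) :
    Lmap U (fun i => A i - B i) = Lmap U A - Lmap U B := by
  simp only [Lmap, comp_sub, sub_comp, Finset.sum_sub_distrib, smul_sub]

lemma Lmap_smul (c : ℂ) (A : I → (H →L[ℂ] H)) :
    Lmap U (fun i => c • A i) = c • Lmap U A := by
  simp only [Lmap, comp_smul, smul_comp, ← Finset.smul_sum, smul_smul, mul_comm]

lemma Lmap_comb (A B : I → (H →L[ℂ] H)) (t : ℝ) :
    Lmap U (fun i => A i + t • (B i - A i)) = Lmap U A + t • (Lmap U B - Lmap U A) := by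
  have hc : ∀ (T : H →L[ℂ] H), t • T = (t:ℂ) • T := fun T =>
    RCLike.real_smul_eq_coe_smul (K := ℂ) t T
  rw [hc]
  have : (fun i => A i + t • (B i - A i)) = (fun i => A i + (t:ℂ) • (B i - A i)) := by
    funext i; rw [hc]
  rw [this]
  have h2 : Lmap U (fun i => (t:ℂ) • (B i - A i)) = (t:ℂ) • (Lmap U B - Lmap U A) := by
    rw [Lmap_smul U (t:ℂ) (fun i => B i - A i), Lmap_sub]
  rw [← h2, ← Lmap_add]

end LmapLinear

/-- (Minimal support condition) A point `A ∈ 𝒞` is extreme if and only if for every `B ∈ 𝒞`,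
`range (B i) ⊆ range (A i)` for all `i` implies `B = A`. -/
theorem extremePoint_iff_minimal_support
    {H : Type*} [NormedAddCommGroup H] [InnerProductSpace ℂ H] [FiniteDimensional ℂ H]
    [Nontrivial H]
    {G : Type*} [Group G] [Fintype G] {I : Type*} [Fintype I] [Nonempty I]
    (U : G → (H →L[ℂ] H))
    (hU1 : ∀ g, U g ∘L ContinuousLinearMap.adjoint (U g) = 1)
    (hU2 : ∀ g, ContinuousLinearMap.adjoint (U g) ∘L U g = 1)
    (hUm : ∀ g h, U (g * h) = U g ∘L U h)
    (A : I → (H →L[ℂ] H)) (hA : A ∈ covSet U) :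
    A ∈ Set.extremePoints ℝ (covSet U) ↔
      ∀ B ∈ covSet U,
        (∀ i, LinearMap.range (B i : H →ₗ[ℂ] H) ≤ LinearMap.range (A i : H →ₗ[ℂ] H)) → B = A := by
  constructor
  · -- extreme point → minimal support
    intro hext B hB hrangele
    have hDsa : ∀ i, IsSelfAdjoint (B i - A i) := fun i => (hB.1 i).isSelfAdjoint.sub (hA.1 i).isSelfAdjoint
    have hrange' : ∀ i, LinearMap.range ((B i - A i : H →L[ℂ] H) : H →ₗ[ℂ] H) ≤ LinearMap.range (A i : H →ₗ[ℂ] H) := by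
      intro i y hy
      obtain ⟨x, hx⟩ := hy
      rw [← hx]
      have : ((B i - A i : H →L[ℂ] H) : H →ₗ[ℂ] H) x = B i x - A i x := rfl
      rw [this]
      exact Submodule.sub_mem _ (hrangele i ⟨x, rfl⟩) (LinearMap.mem_range_self _ x)
    choose ε hεpos hεP using fun i => aux_perturb (hA.1 i) (hDsa i) (hrange' i)
    have huniv : (Finset.univ : Finset I).Nonempty := Finset.univ_nonempty
    set εm := Finset.univ.inf' huniv ε with hεm
    have hεmpos : 0 < εm := (Finset.lt_inf'_iff huniv).mpr fun i _ => hεpos i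
    have hεmle : ∀ i, εm ≤ ε i := fun i => Finset.inf'_le ε (Finset.mem_univ i)
    set x₁ : I → (H →L[ℂ] H) := fun i => A i + εm • (B i - A i) with hx₁
    set x₂ : I → (H →L[ℂ] H) := fun i => A i + (-εm) • (B i - A i) with hx₂
    have habs1 : |εm| ≤ εm := le_of_eq (abs_of_pos hεmpos)
    have habs2 : |(-εm)| ≤ εm := by rw [abs_neg]; exact habs1
    have hmem : ∀ t : ℝ, |t| ≤ εm →
        (fun i => A i + t • (B i - A i)) ∈ covSet U := by
      intro t ht
      constructor
      · intro i
        exact hεP i t (le_trans ht (hεmle i))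
      · rw [Lmap_comb, hA.2, hB.2, sub_self, smul_zero, add_zero]
    have h₁mem : x₁ ∈ covSet U := hmem εm habs1
    have h₂mem : x₂ ∈ covSet U := hmem (-εm) habs2
    have hseg : A ∈ openSegment ℝ x₁ x₂ := by
      refine ⟨1/2, 1/2, by norm_num, by norm_num, by norm_num, ?_⟩
      funext i
      show (1/2 : ℝ) • x₁ i + (1/2 : ℝ) • x₂ i = A i
      rw [hx₁, hx₂]
      show (1/2 : ℝ) • (A i + εm • (B i - A i)) + (1/2 : ℝ) • (A i + (-εm) • (B i - A i)) = A i
      module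
    have hx₁A := hext.2 h₁mem h₂mem hseg
    funext i
    have : A i + εm • (B i - A i) = A i := congrFun hx₁A i
    have h0 : εm • (B i - A i) = 0 := by
      have := congrArg (fun T => T - A i) this
      simpa using this
    have h1 : B i - A i = 0 := by
      rcases smul_eq_zero.mp h0 with h | h
      · exact absurd h (ne_of_gt hεmpos)
      · exact h
    have := sub_eq_zero.mp h1
    exact this
  · -- minimal support → extreme point
    intro hmin
    refine ⟨hA, fun x₁ h₁ x₂ h₂ hseg => ?_⟩
    obtain ⟨a, b, ha, hb, hab, hsum⟩ := hseg
    have hker : ∀ i (v : H), A i v = 0 →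
        RCLike.re (inner ℂ (x₁ i v) v : ℂ) = 0 ∧ RCLike.re (inner ℂ (x₂ i v) v : ℂ) = 0 := by
      intro i v hv
      have hAi : A i v = a • x₁ i v + b • x₂ i v := by
        have h := congrFun hsum i
        have : (a • x₁ + b • x₂) i v = a • x₁ i v + b • x₂ i v := rfl
        rw [← this, h]
      have hre : (0:ℝ) = a * RCLike.re (inner ℂ (x₁ i v) v : ℂ)
          + b * RCLike.re (inner ℂ (x₂ i v) v : ℂ) := by
        have h0 : RCLike.re (inner ℂ (A i v) v : ℂ) = 0 := by rw [hv, inner_zero_left]; simp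
        rw [hAi] at h0
        rw [inner_add_left, RCLike.real_smul_eq_coe_smul (K := ℂ) a (x₁ i v),
          RCLike.real_smul_eq_coe_smul (K := ℂ) b (x₂ i v),
          inner_smul_left, inner_smul_left, RCLike.conj_ofReal, RCLike.conj_ofReal,
          map_add, RCLike.re_ofReal_mul, RCLike.re_ofReal_mul] at h0
        linarith
      have hr1 : (0:ℝ) ≤ RCLike.re (inner ℂ (x₁ i v) v : ℂ) := (h₁.1 i).re_inner_nonneg_left v
      have hr2 : (0:ℝ) ≤ RCLike.re (inner ℂ (x₂ i v) v : ℂ) := (h₂.1 i).re_inner_nonneg_left v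
      constructor
      · nlinarith
      · nlinarith
    have hle : ∀ (x : I → (H →L[ℂ] H)), x ∈ covSet U →
        (∀ i (v : H), A i v = 0 → RCLike.re (inner ℂ (x i v) v : ℂ) = 0) →
        (∀ i, LinearMap.range (x i : H →ₗ[ℂ] H) ≤ LinearMap.range (A i : H →ₗ[ℂ] H)) := by
      intro x hx hk i
      rw [aux_range_eq (hx.1 i).isSelfAdjoint, aux_range_eq (hA.1 i).isSelfAdjoint]
      apply Submodule.orthogonal_le
      intro v hv
      have hv' : A i v = 0 := LinearMap.mem_ker.mp hv
      exact LinearMap.mem_ker.mpr (aux_apply_eq_zero (hx.1 i) (hk i v hv'))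
    have hA₁ : x₁ = A :=
      hmin x₁ h₁ (hle x₁ h₁ (fun i v hv => (hker i v hv).1))
    have hA₂ : x₂ = A :=
      hmin x₂ h₂ (hle x₂ h₂ (fun i v hv => (hker i v hv).2))
    exact hA₁
end

section
/- If the representation U is irreducible, in the sense that every operator C with C ∘ U g = U g ∘ C for all g ∈ G is a scalar multiple of the identity, then every extreme point A of 𝒞 has exactly one nonzero component: there exists i₀ ∈ I with rank(A i₀) = 1 and A i = 0 for all i ≠ i₀. -/
open ContinuousLinearMap

section Aux

set_option linter.unusedSectionVars false

variable {H : Type*} [NormedAddCommGroup H] [InnerProductSpace ℂ H] [FiniteDimensional ℂ H]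

local notation "⟪" x ", " y "⟫" => @inner ℂ _ _ x y

lemma selfadj_inner_move {T : H →L[ℂ] H} (hT : IsSelfAdjoint T) (x y : H) :
    ⟪T x, y⟫ = ⟪x, T y⟫ := by
  conv_lhs => rw [← (ContinuousLinearMap.isSelfAdjoint_iff'.mp hT)]
  exact ContinuousLinearMap.adjoint_inner_left T y x

lemma pos_cs {T : H →L[ℂ] H} (hT : T.IsPositive) (x y : H) :
    ‖⟪x, T y⟫‖ * ‖⟪y, T x⟫‖ ≤ RCLike.re ⟪x, T x⟫ * RCLike.re ⟪y, T y⟫ := by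
  let c : PreInnerProductSpace.Core ℂ H :=
  { inner := fun a b => ⟪a, T b⟫
    conj_inner_symm := fun a b => by
      show (starRingEnd ℂ) ⟪b, T a⟫ = ⟪a, T b⟫
      rw [inner_conj_symm, selfadj_inner_move hT.isSelfAdjoint]
    re_inner_nonneg := fun a => hT.re_inner_nonneg_right a
    add_left := fun a b z => by
      show ⟪a + b, T z⟫ = ⟪a, T z⟫ + ⟪b, T z⟫
      simp [inner_add_left]
    smul_left := fun a b r => by
      show ⟪r • a, T b⟫ = (starRingEnd ℂ) r * ⟪a, T b⟫
      rw [inner_smul_left] }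
  exact @InnerProductSpace.Core.inner_mul_inner_self_le ℂ H _ _ _ c x y

lemma rclike_coe (r : ℝ) : (RCLike.ofReal r : ℂ) = Complex.ofReal r := rfl

lemma pos_inner_real {T : H →L[ℂ] H} (hT : T.IsPositive) (x : H) :
    ((⟪x, T x⟫.re : ℝ) : ℂ) = ⟪x, T x⟫ := by
  rw [← Complex.conj_eq_iff_re, inner_conj_symm, selfadj_inner_move hT.isSelfAdjoint]

lemma pos_apply_eq_zero {T : H →L[ℂ] H} (hT : T.IsPositive) {x : H}
    (h : ⟪x, T x⟫ = 0) : T x = 0 := by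
  have h2 := pos_cs hT (T x) x
  rw [h] at h2
  simp only [map_zero, mul_zero] at h2
  have h3 : ⟪x, T (T x)⟫ = ⟪T x, T x⟫ := (selfadj_inner_move hT.isSelfAdjoint x (T x)).symm
  rw [h3] at h2
  have h4 : (0:ℝ) ≤ ‖⟪T x, T x⟫‖ * ‖⟪T x, T x⟫‖ := mul_nonneg (norm_nonneg _) (norm_nonneg _)
  have h5 : ‖⟪T x, T x⟫‖ = 0 := by nlinarith
  rw [norm_eq_zero] at h5
  exact inner_self_eq_zero.mp h5

lemma trace_clm_eq_sum_inner (f : H →L[ℂ] H) :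
    LinearMap.trace ℂ H (f : H →ₗ[ℂ] H) =
      ∑ k, ⟪(stdOrthonormalBasis ℂ H) k, f ((stdOrthonormalBasis ℂ H) k)⟫ := by
  classical
  set b := stdOrthonormalBasis ℂ H
  rw [LinearMap.trace_eq_matrix_trace ℂ b.toBasis, Matrix.trace]
  congr 1
  ext k
  rw [Matrix.diag_apply, LinearMap.toMatrix_apply, b.coe_toBasis, b.coe_toBasis_repr_apply,
    b.repr_apply_apply]
  rfl

lemma pos_trace_real {T : H →L[ℂ] H} (hT : T.IsPositive) :
    (((LinearMap.trace ℂ H (T : H →ₗ[ℂ] H)).re : ℝ) : ℂ) = LinearMap.trace ℂ H (T : H →ₗ[ℂ] H)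
    ∧ 0 ≤ (LinearMap.trace ℂ H (T : H →ₗ[ℂ] H)).re := by
  rw [trace_clm_eq_sum_inner]
  constructor
  · push_cast [Complex.re_sum]
    exact Finset.sum_congr rfl fun k _ => pos_inner_real hT _
  · rw [Complex.re_sum]
    exact Finset.sum_nonneg fun k _ => hT.re_inner_nonneg_right _

lemma pos_trace_pos {T : H →L[ℂ] H} (hT : T.IsPositive) (hne : T ≠ 0) :
    0 < (LinearMap.trace ℂ H (T : H →ₗ[ℂ] H)).re := by
  rcases (pos_trace_real hT).2.lt_or_eq with h | h
  · exact h
  exfalso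
  apply hne
  have hz : ∀ k, ⟪(stdOrthonormalBasis ℂ H) k, T ((stdOrthonormalBasis ℂ H) k)⟫ = 0 := by
    have hsum : ∑ k, (⟪(stdOrthonormalBasis ℂ H) k, T ((stdOrthonormalBasis ℂ H) k)⟫).re = 0 := by
      have h2 := congrArg Complex.re (trace_clm_eq_sum_inner T)
      rw [← h, Complex.re_sum] at h2
      exact h2.symm
    intro k
    have hk : (⟪(stdOrthonormalBasis ℂ H) k, T ((stdOrthonormalBasis ℂ H) k)⟫).re = 0 :=
      (Finset.sum_eq_zero_iff_of_nonneg (fun j _ => hT.re_inner_nonneg_right _)).mp hsum k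
        (Finset.mem_univ k)
    rw [← pos_inner_real hT, hk]
    norm_num
  have hTb : ∀ k, T ((stdOrthonormalBasis ℂ H) k) = 0 := fun k => pos_apply_eq_zero hT (hz k)
  apply ContinuousLinearMap.coe_injective
  apply Module.Basis.ext (stdOrthonormalBasis ℂ H).toBasis
  intro k
  simpa using hTb k

lemma isPositive_smul_real {T : H →L[ℂ] H} (hT : T.IsPositive) {r : ℝ} (hr : 0 ≤ r) :
    ((r : ℂ) • T).IsPositive := by
  rw [ContinuousLinearMap.isPositive_iff_complex]
  intro x
  have h1 : ⟪((r : ℂ) • T) x, x⟫ = (r : ℂ) * ⟪T x, x⟫ := by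
    rw [ContinuousLinearMap.smul_apply, inner_smul_left]
    simp
  have h2 : ((⟪x, T x⟫.re : ℝ) : ℂ) = ⟪x, T x⟫ := pos_inner_real hT x
  have h3 : ⟪T x, x⟫ = ((⟪x, T x⟫.re : ℝ) : ℂ) := by
    rw [← inner_conj_symm, ← h2]
    simp
  have h4 : (r : ℂ) * ((⟪x, T x⟫.re : ℝ) : ℂ) = ((r * ⟪x, T x⟫.re : ℝ) : ℂ) := by
    push_cast
    ring
  rw [h1, h3, h4]
  constructor
  · simp
  · simp only [RCLike.re_to_complex, Complex.ofReal_re]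
    exact mul_nonneg hr (hT.re_inner_nonneg_right x)

variable {G : Type*} [Group G] [Fintype G] {I : Type*} [Fintype I]
  (U : G → (H →L[ℂ] H))

lemma U_one (hU2 : ∀ g, ContinuousLinearMap.adjoint (U g) ∘L U g = 1)
    (hUm : ∀ g h, U (g * h) = U g ∘L U h) : U 1 = 1 := by
  have hUm' : ∀ a b : G, U (a * b) = U a * U b := fun a b => (hUm a b)
  have h1 : U 1 = U 1 * U 1 := by rw [← hUm']; norm_num
  have h2 : ContinuousLinearMap.adjoint (U 1) * U 1 = 1 := hU2 1
  calc U 1 = 1 * U 1 := (one_mul _).symm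
    _ = (ContinuousLinearMap.adjoint (U 1) * U 1) * U 1 := by rw [h2]
    _ = ContinuousLinearMap.adjoint (U 1) * (U 1 * U 1) := by rw [mul_assoc]
    _ = ContinuousLinearMap.adjoint (U 1) * U 1 := by rw [← h1]
    _ = 1 := h2

lemma U_adj (hU2 : ∀ g, ContinuousLinearMap.adjoint (U g) ∘L U g = 1)
    (hUm : ∀ g h, U (g * h) = U g ∘L U h) (g : G) :
    ContinuousLinearMap.adjoint (U g) = U g⁻¹ := by
  have hUm' : ∀ a b : G, U (a * b) = U a * U b := fun a b => (hUm a b)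
  have hinv : U g * U g⁻¹ = 1 := by rw [← hUm', mul_inv_cancel]; exact U_one U hU2 hUm
  have h2 : ContinuousLinearMap.adjoint (U g) * U g = 1 := hU2 g
  calc ContinuousLinearMap.adjoint (U g)
      = ContinuousLinearMap.adjoint (U g) * (U g * U g⁻¹) := by rw [hinv, mul_one]
    _ = (ContinuousLinearMap.adjoint (U g) * U g) * U g⁻¹ := by rw [mul_assoc]
    _ = U g⁻¹ := by rw [h2, one_mul]

lemma Lmap_comm (hU2 : ∀ g, ContinuousLinearMap.adjoint (U g) ∘L U g = 1)
    (hUm : ∀ g h, U (g * h) = U g ∘L U h) (B : I → (H →L[ℂ] H)) (h : G) :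
    U h ∘L Lmap U B = Lmap U B ∘L U h := by
  have hUm' : ∀ a b : G, U (a * b) = U a * U b := fun a b => (hUm a b)
  have hadj := U_adj U hU2 hUm
  show U h * Lmap U B = Lmap U B * U h
  simp only [Lmap, hadj, ← mul_def]
  rw [mul_smul_comm, smul_mul_assoc]
  congr 1
  rw [Finset.mul_sum, Finset.sum_mul]
  refine Finset.sum_congr rfl fun i _ => ?_
  rw [Finset.mul_sum, Finset.sum_mul]
  refine Fintype.sum_equiv (Equiv.mulLeft h) _ _ fun g => ?_
  have e1 : U (h * g) = U h * U g := hUm' h g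
  have e2 : U ((h * g)⁻¹) * U h = U g⁻¹ := by
    rw [← hUm']; congr 1; group
  show U h * (U g * B i * U g⁻¹) = U (Equiv.mulLeft h g) * B i * U (Equiv.mulLeft h g)⁻¹ * U h
  simp only [Equiv.coe_mulLeft]
  calc U h * (U g * B i * U g⁻¹)
      = (U h * U g) * B i * U g⁻¹ := by simp only [mul_assoc]
    _ = U (h * g) * B i * (U ((h * g)⁻¹) * U h) := by rw [e1, e2]
    _ = U (h * g) * B i * U ((h * g)⁻¹) * U h := by simp only [mul_assoc]

lemma Lmap_trace (hU2 : ∀ g, ContinuousLinearMap.adjoint (U g) ∘L U g = 1)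
    (B : I → (H →L[ℂ] H)) :
    LinearMap.trace ℂ H (Lmap U B : H →ₗ[ℂ] H) =
      ∑ i, LinearMap.trace ℂ H (B i : H →ₗ[ℂ] H) := by
  have hterm : ∀ i g, LinearMap.trace ℂ H
      ((U g ∘L B i ∘L ContinuousLinearMap.adjoint (U g) : H →L[ℂ] H) : H →ₗ[ℂ] H)
      = LinearMap.trace ℂ H (B i : H →ₗ[ℂ] H) := by
    intro i g
    rw [toLinearMap_comp, LinearMap.trace_comp_comm', ← toLinearMap_comp, comp_assoc, hU2, one_def, comp_id]
  simp only [Lmap, toLinearMap_smul, map_smul, toLinearMap_sum, map_sum, hterm]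
  rw [Finset.sum_comm]
  simp only [Finset.sum_const, Finset.card_univ, smul_eq_mul, nsmul_eq_mul]
  rw [← mul_assoc, inv_mul_cancel₀, one_mul]
  exact_mod_cast Nat.cast_ne_zero.mpr Fintype.card_ne_zero

lemma mem_covSet_of [Nontrivial H]
    (hU2 : ∀ g, ContinuousLinearMap.adjoint (U g) ∘L U g = 1)
    (hUm : ∀ g h, U (g * h) = U g ∘L U h)
    (hirr : ∀ C : H →L[ℂ] H, (∀ g, C ∘L U g = U g ∘L C) → ∃ c : ℂ, C = c • 1)
    (B : I → (H →L[ℂ] H)) (hpos : ∀ i, (B i).IsPositive)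
    (htr : ∑ i, LinearMap.trace ℂ H (B i : H →ₗ[ℂ] H) = (Module.finrank ℂ H : ℂ)) :
    B ∈ covSet U := by
  refine ⟨hpos, ?_⟩
  obtain ⟨c, hc⟩ := hirr (Lmap U B) (fun g => (Lmap_comm U hU2 hUm B g).symm)
  have htrL : LinearMap.trace ℂ H (Lmap U B : H →ₗ[ℂ] H) = (Module.finrank ℂ H : ℂ) := by
    rw [Lmap_trace U hU2 B, htr]
  have htr1 : LinearMap.trace ℂ H ((c • (1 : H →L[ℂ] H) : H →L[ℂ] H) : H →ₗ[ℂ] H)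
      = c * (Module.finrank ℂ H : ℂ) := by
    rw [toLinearMap_smul, map_smul, smul_eq_mul]
    congr 1
    rw [one_def, coe_id, LinearMap.trace_id]
  have hc1 : c = 1 := by
    have hd : ((Module.finrank ℂ H : ℕ) : ℂ) ≠ 0 := by
      exact_mod_cast Nat.cast_ne_zero.mpr Module.finrank_pos.ne'
    have h3 : c * (Module.finrank ℂ H : ℂ) = (Module.finrank ℂ H : ℂ) := by
      rw [← htr1, ← hc, htrL]
    exact mul_right_cancel₀ hd (by rw [h3, one_mul])
  rw [hc, hc1, one_smul]

end Aux

set_option maxHeartbeats 1600000 in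
/-- If the representation `U` is irreducible (every operator commuting with all `U g` is a
scalar multiple of the identity), then every extreme point `A` of `𝒞` has exactly one nonzero
component: some `A i₀` has rank one and `A i = 0` for all `i ≠ i₀`. -/
theorem extremePoint_of_irreducible_single_orbit
    {H : Type*} [NormedAddCommGroup H] [InnerProductSpace ℂ H] [FiniteDimensional ℂ H]
    [Nontrivial H]
    {G : Type*} [Group G] [Fintype G] {I : Type*} [Fintype I] [Nonempty I]
    (U : G → (H →L[ℂ] H))
    (hU1 : ∀ g, U g ∘L ContinuousLinearMap.adjoint (U g) = 1)
    (hU2 : ∀ g, ContinuousLinearMap.adjoint (U g) ∘L U g = 1)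
    (hUm : ∀ g h, U (g * h) = U g ∘L U h)
    (hirr : ∀ C : H →L[ℂ] H, (∀ g, C ∘L U g = U g ∘L C) → ∃ c : ℂ, C = c • 1)
    (A : I → (H →L[ℂ] H)) (hA : A ∈ covSet U)
    (hext : A ∈ Set.extremePoints ℝ (covSet U)) :
    ∃ i₀ : I, Module.finrank ℂ (LinearMap.range (A i₀ : H →ₗ[ℂ] H)) = 1 ∧
      ∀ i ≠ i₀, A i = 0 := by
  classical
  obtain ⟨hApos, hAL⟩ := hA
  have hd : 0 < Module.finrank ℂ H := Module.finrank_pos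
  have hdC : ((Module.finrank ℂ H : ℕ) : ℂ) ≠ 0 := by exact_mod_cast hd.ne'
  have hdR : ((Module.finrank ℂ H : ℕ) : ℝ) ≠ 0 := by exact_mod_cast hd.ne'
  set τ : (I → (H →L[ℂ] H)) → ℂ :=
    fun B => ∑ i, LinearMap.trace ℂ H (B i : H →ₗ[ℂ] H) with hτdef
  have htrA : τ A = (Module.finrank ℂ H : ℂ) := by
    have h1 := Lmap_trace U hU2 A
    rw [hAL] at h1
    simp only [hτdef]
    rw [← h1, one_def, coe_id, LinearMap.trace_id]
  -- the trace of a nonzero positive family is a positive real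
  have hτpos : ∀ B : I → (H →L[ℂ] H), (∀ i, (B i).IsPositive) → B ≠ 0 →
      ((((τ B).re : ℝ) : ℂ) = τ B ∧ 0 < (τ B).re) := by
    intro B hB hBne
    obtain ⟨j, hj⟩ := Function.ne_iff.mp hBne
    constructor
    · simp only [hτdef]
      push_cast [Complex.re_sum]
      exact Finset.sum_congr rfl fun k _ => (pos_trace_real (hB k)).1
    · simp only [hτdef, Complex.re_sum]
      refine Finset.sum_pos' (fun k _ => (pos_trace_real (hB k)).2) ⟨j, Finset.mem_univ j, ?_⟩
      exact pos_trace_pos (hB j) (by simpa using hj)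
  -- key splitting property of the extreme point
  have hsplit : ∀ B C : I → (H →L[ℂ] H), (∀ i, (B i).IsPositive) → (∀ i, (C i).IsPositive) →
      A = B + C → B ≠ 0 → C ≠ 0 → ∃ t : ℝ, 0 < t ∧ B = t • A := by
    intro B C hB hC hBC hBne hCne
    set n : ℝ := ((Module.finrank ℂ H : ℕ) : ℝ) with hn
    obtain ⟨hBreal, hBpos⟩ := hτpos B hB hBne
    obtain ⟨hCreal, hCpos⟩ := hτpos C hC hCne
    set β : ℝ := (τ B).re
    set γ : ℝ := (τ C).re
    have hsum : τ B + τ C = (Module.finrank ℂ H : ℂ) := by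
      rw [← htrA]
      simp only [hτdef]
      rw [← Finset.sum_add_distrib]
      exact Finset.sum_congr rfl fun k _ => by
        rw [hBC]; simp
    have hβγ : β + γ = n := by
      have := congrArg Complex.re hsum
      simpa [Complex.add_re, hn] using this
    have hnpos : 0 < n := by nlinarith
    set B' : I → (H →L[ℂ] H) := (n / β : ℝ) • B with hB'def
    set C' : I → (H →L[ℂ] H) := (n / γ : ℝ) • C with hC'def
    have hsmul_trace : ∀ (r : ℝ) (D : I → (H →L[ℂ] H)), τ (r • D) = ((r : ℝ) : ℂ) * τ D := by
      intro r D
      simp only [hτdef, Pi.smul_apply, toLinearMap_smul, LinearMap.map_smul_of_tower]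
      rw [← Finset.smul_sum, Complex.real_smul]
    have hB'mem : B' ∈ covSet U := by
      refine mem_covSet_of U hU2 hUm hirr B' (fun i => ?_) ?_
      · rw [hB'def, Pi.smul_apply, RCLike.real_smul_eq_coe_smul (K := ℂ), rclike_coe]
        exact isPositive_smul_real (hB i) (by positivity)
      · rw [show (∑ i, LinearMap.trace ℂ H ((B' i : H →L[ℂ] H) : H →ₗ[ℂ] H)) = τ B' from rfl,
          hB'def, hsmul_trace, ← hBreal, ← Complex.ofReal_mul,
          div_mul_cancel₀ _ (ne_of_gt hBpos), hn, Complex.ofReal_natCast]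
    have hC'mem : C' ∈ covSet U := by
      refine mem_covSet_of U hU2 hUm hirr C' (fun i => ?_) ?_
      · rw [hC'def, Pi.smul_apply, RCLike.real_smul_eq_coe_smul (K := ℂ), rclike_coe]
        exact isPositive_smul_real (hC i) (by positivity)
      · rw [show (∑ i, LinearMap.trace ℂ H ((C' i : H →L[ℂ] H) : H →ₗ[ℂ] H)) = τ C' from rfl,
          hC'def, hsmul_trace, ← hCreal, ← Complex.ofReal_mul,
          div_mul_cancel₀ _ (ne_of_gt hCpos), hn, Complex.ofReal_natCast]
    have e1 : (β / n) * (n / β) = 1 := by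
      rw [div_mul_div_comm, mul_comm β n, div_self (ne_of_gt (mul_pos hnpos hBpos))]
    have e2 : (γ / n) * (n / γ) = 1 := by
      rw [div_mul_div_comm, mul_comm γ n, div_self (ne_of_gt (mul_pos hnpos hCpos))]
    have hseg : A ∈ openSegment ℝ B' C' := by
      refine ⟨β / n, γ / n, by positivity, by positivity, ?_, ?_⟩
      · field_simp
        linarith
      · rw [hB'def, hC'def, smul_smul, smul_smul, e1, e2, one_smul, one_smul, hBC]
    have hBA := hext.2 hB'mem hC'mem hseg
    refine ⟨β / n, by positivity, ?_⟩
    calc B = ((β / n) * (n / β)) • B := by rw [e1, one_smul]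
      _ = (β / n) • B' := by rw [hB'def, smul_smul]
      _ = (β / n) • A := by rw [hBA]
  -- A is nonzero
  have hAne : A ≠ 0 := by
    intro h0
    rw [h0] at hAL
    have : Lmap U (0 : I → (H →L[ℂ] H)) = 0 := by
      simp [Lmap]
    rw [this] at hAL
    obtain ⟨x, hx⟩ := exists_ne (0 : H)
    have := congrArg (fun f : H →L[ℂ] H => f x) hAL
    simp at this
    exact hx this.symm
  obtain ⟨i₀, hi₀⟩ := Function.ne_iff.mp hAne
  have hi₀ne : A i₀ ≠ 0 := by simpa using hi₀
  -- all other components vanish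
  have hothers : ∀ i ≠ i₀, A i = 0 := by
    intro j hj
    by_contra hne
    set B : I → (H →L[ℂ] H) := fun k => if k = i₀ then A i₀ else 0 with hBdef
    set C : I → (H →L[ℂ] H) := fun k => if k = i₀ then 0 else A k with hCdef
    have hB : ∀ i, (B i).IsPositive := by
      intro i
      rw [hBdef]
      by_cases h : i = i₀ <;> simp [h, hApos i₀, ContinuousLinearMap.isPositive_zero]
    have hC : ∀ i, (C i).IsPositive := by
      intro i
      rw [hCdef]
      by_cases h : i = i₀ <;> simp [h, hApos i, ContinuousLinearMap.isPositive_zero]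
    have hBC : A = B + C := by
      funext k
      rw [hBdef, hCdef]
      by_cases h : k = i₀ <;> simp [h]
    have hBne : B ≠ 0 := by
      intro h0
      have := congrFun h0 i₀
      rw [hBdef] at this
      simp at this
      exact hi₀ne this
    have hCne : C ≠ 0 := by
      intro h0
      have := congrFun h0 j
      rw [hCdef] at this
      simp [hj] at this
      exact hne this
    obtain ⟨t, ht, hBt⟩ := hsplit B C hB hC hBC hBne hCne
    have hBj := congrFun hBt j
    rw [hBdef] at hBj
    simp [hj] at hBj
    apply hne
    calc A j = t⁻¹ • (t • A j) := (inv_smul_smul₀ (ne_of_gt ht) (A j)).symm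
      _ = 0 := by rw [← hBj, smul_zero]
  -- the nonzero component has rank one
  refine ⟨i₀, ?_, hothers⟩
  set T : H →L[ℂ] H := A i₀ with hTdef
  have hT : T.IsPositive := hApos i₀
  -- find u with ⟪u, T u⟫ ≠ 0
  have hu : ∃ u : H, (inner ℂ u (T u) : ℂ) ≠ 0 := by
    by_contra h
    push_neg at h
    apply hi₀ne
    apply ContinuousLinearMap.ext
    intro x
    simpa using pos_apply_eq_zero hT (h x)
  obtain ⟨u, hc0⟩ := hu
  set c : ℂ := inner ℂ u (T u) with hcdef
  have hcreal : ((c.re : ℝ) : ℂ) = c := pos_inner_real hT u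
  have hcre : 0 < c.re := by
    have h0 : (0:ℝ) ≤ c.re := by
      have := hT.re_inner_nonneg_right u
      simpa only [RCLike.re_to_complex, ← hcdef] using this
    rcases h0.lt_or_eq with h | h
    · exact h
    · exfalso; apply hc0; rw [← hcreal, ← h]; simp
  have hTu : T u ≠ 0 := by
    intro h0
    apply hc0
    rw [hcdef, h0, inner_zero_right]
  -- rank-one piece
  set P : H →L[ℂ] H := c⁻¹ • ((innerSL ℂ (T u)).smulRight (T u)) with hPdef
  have hPapply : ∀ x, P x = (c⁻¹ * (inner ℂ (T u) x : ℂ)) • T u := by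
    intro x
    rw [hPdef]
    simp [smul_smul]
  have hβne : c.re ≠ 0 := ne_of_gt hcre
  -- ⟪x, P x⟫ is the nonnegative real  normSq ⟪T u, x⟫ / c.re
  have hPinner : ∀ x : H,
      (inner ℂ x (P x) : ℂ) = ((Complex.normSq (inner ℂ (T u) x) / c.re : ℝ) : ℂ) := by
    intro x
    rw [hPapply x, inner_smul_right]
    have hw : (inner ℂ x (T u) : ℂ) = (starRingEnd ℂ) (inner ℂ (T u) x : ℂ) :=
      (inner_conj_symm x (T u)).symm
    rw [hw, mul_assoc, Complex.mul_conj, ← hcreal]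
    rw [div_eq_mul_inv]
    push_cast [Complex.ofReal_re]
    ring
  -- a helper to establish positivity from diagonal values
  have hposof : ∀ (S : H →L[ℂ] H), (∀ x, ∃ s : ℝ, 0 ≤ s ∧ (inner ℂ x (S x) : ℂ) = (s : ℂ)) →
      S.IsPositive := by
    intro S hS
    rw [ContinuousLinearMap.isPositive_iff_complex]
    intro x
    obtain ⟨s, hs0, hs⟩ := hS x
    have h1 : (inner ℂ (S x) x : ℂ) = (s : ℂ) := by
      rw [← inner_conj_symm, hs]
      simp
    rw [h1]
    constructor
    · simp
    · simp [hs0]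
  have hPpos : P.IsPositive := by
    refine hposof P fun x =>
      ⟨Complex.normSq (inner ℂ (T u) x) / c.re,
        div_nonneg (Complex.normSq_nonneg _) hcre.le, hPinner x⟩
  set Q : H →L[ℂ] H := T - P with hQdef
  have hQinner : ∀ x : H,
      (inner ℂ x (Q x) : ℂ)
        = (((inner ℂ x (T x) : ℂ).re - Complex.normSq (inner ℂ (T u) x) / c.re : ℝ) : ℂ) := by
    intro x
    rw [hQdef]
    rw [ContinuousLinearMap.sub_apply, inner_sub_right, hPinner x, ← pos_inner_real hT x]
    push_cast [Complex.ofReal_re]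
    ring
  have hQpos : Q.IsPositive := by
    refine hposof Q fun x => ⟨(inner ℂ x (T x) : ℂ).re - Complex.normSq (inner ℂ (T u) x) / c.re,
      ?_, hQinner x⟩
    have hcs := pos_cs hT u x
    have hw1 : (inner ℂ u (T x) : ℂ) = (inner ℂ (T u) x : ℂ) :=
      (selfadj_inner_move hT.isSelfAdjoint u x).symm
    have hw2 : ‖(inner ℂ x (T u) : ℂ)‖ = ‖(inner ℂ (T u) x : ℂ)‖ := by
      rw [(inner_conj_symm x (T u)).symm]
      exact RCLike.norm_conj _
    rw [hw1, hw2] at hcs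
    have hns : Complex.normSq (inner ℂ (T u) x) = ‖(inner ℂ (T u) x : ℂ)‖ * ‖(inner ℂ (T u) x : ℂ)‖ := by
      rw [Complex.normSq_eq_norm_sq]
      ring
    simp only [RCLike.re_to_complex] at hcs
    rw [sub_nonneg, div_le_iff₀ hcre, hns]
    nlinarith [hT.re_inner_nonneg_right x]
  have hPu : P u = T u := by
    rw [hPapply u]
    have h1 : (inner ℂ (T u) u : ℂ) = (starRingEnd ℂ) c := (inner_conj_symm (T u) u).symm
    have h2 : (starRingEnd ℂ) c = c := by rw [← hcreal, Complex.conj_ofReal]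
    rw [h1, h2, inv_mul_cancel₀ hc0, one_smul]
  have hPne : P ≠ 0 := by
    intro h0
    apply hTu
    rw [← hPu, h0, ContinuousLinearMap.zero_apply]
  -- T is a scalar multiple of P
  have hTP : ∃ s : ℝ, T = s • P := by
    by_cases hQ0 : Q = 0
    · refine ⟨1, ?_⟩
      rw [one_smul]
      have := sub_eq_zero.mp (hQdef ▸ hQ0)
      exact this
    · set B : I → (H →L[ℂ] H) := fun k => if k = i₀ then P else 0 with hBdef
      set C : I → (H →L[ℂ] H) := fun k => if k = i₀ then Q else 0 with hCdef
      have hB : ∀ i, (B i).IsPositive := by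
        intro i
        rw [hBdef]
        by_cases h : i = i₀ <;> simp [h, hPpos, ContinuousLinearMap.isPositive_zero]
      have hC : ∀ i, (C i).IsPositive := by
        intro i
        rw [hCdef]
        by_cases h : i = i₀ <;> simp [h, hQpos, ContinuousLinearMap.isPositive_zero]
      have hBC : A = B + C := by
        funext k
        rw [hBdef, hCdef]
        by_cases h : k = i₀
        · subst h
          simp [← hTdef, hQdef]
        · simp [h, hothers k h]
      have hBne : B ≠ 0 := by
        intro h0
        have := congrFun h0 i₀
        rw [hBdef] at this
        simp at this
        exact hPne this
      have hCne : C ≠ 0 := by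
        intro h0
        have := congrFun h0 i₀
        rw [hCdef] at this
        simp at this
        exact hQ0 this
      obtain ⟨t, ht, hBt⟩ := hsplit B C hB hC hBC hBne hCne
      have hPt : P = t • T := by
        have h5 := congrFun hBt i₀
        rw [hBdef] at h5
        simpa [← hTdef] using h5
      refine ⟨t⁻¹, ?_⟩
      rw [hPt, inv_smul_smul₀ (ne_of_gt ht)]
  obtain ⟨s, hTs⟩ := hTP
  -- the range of T is contained in the line spanned by T u
  have hrange : LinearMap.range (T : H →ₗ[ℂ] H) ≤ Submodule.span ℂ {T u} := by
    rintro y ⟨x, rfl⟩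
    have h1 : T x = s • P x := by
      conv_lhs => rw [hTs]
      rw [ContinuousLinearMap.smul_apply]
    rw [ContinuousLinearMap.coe_coe, h1, hPapply x]
    exact Submodule.smul_of_tower_mem _ s
      (Submodule.smul_mem _ _ (Submodule.mem_span_singleton_self _))
  have hle : Module.finrank ℂ (LinearMap.range (T : H →ₗ[ℂ] H)) ≤ 1 := by
    calc Module.finrank ℂ (LinearMap.range (T : H →ₗ[ℂ] H))
        ≤ Module.finrank ℂ (Submodule.span ℂ {T u}) := Submodule.finrank_mono hrange
      _ = 1 := finrank_span_singleton hTu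
  have hne0 : Module.finrank ℂ (LinearMap.range (T : H →ₗ[ℂ] H)) ≠ 0 := by
    intro h0
    have hbot : LinearMap.range (T : H →ₗ[ℂ] H) = ⊥ := Submodule.finrank_eq_zero.mp h0
    apply hi₀ne
    apply ContinuousLinearMap.ext
    intro x
    have hx : T x ∈ LinearMap.range (T : H →ₗ[ℂ] H) := ⟨x, rfl⟩
    rw [hbot] at hx
    simpa using hx
  omega
end
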